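/- Consider L(W₁,…,W_{H+1}) = ½‖W_{H+1}···W₁X − Y‖_F² with d_x ≤ d_y and all hidden widths d_i ≥ d_x, XXᵀ invertible. If (W₁,…,W_{H+1}) is a critical point of L and σ_min(W_H···W₁) ≥ ε for some ε > 0, then (W_{H+1}···W₁X − Y)Xᵀ = 0 and (W₁,…,W_{H+1}) is a global minimum of L. -/

import Mathlib

open Matrix

/-- Squared Frobenius norm of a real matrix. -/
noncomputable def frobSq {m n : ℕ} (A : Matrix (Fin m) (Fin n) ℝ) : ℝ :=
  ∑ i, ∑ j, (A i j) ^ 2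

/-- The smallest singular value of a tall matrix `M : ℝ^{n×l}` (with `l ≤ n`), computed as
the square root of the smallest eigenvalue of `Mᵀ * M`. -/
noncomputable def sigmaMinCols {n l : ℕ} (M : Matrix (Fin n) (Fin l) ℝ) : ℝ :=
  Real.sqrt (⨅ i, (Matrix.isHermitian_conjTranspose_mul_self M).eigenvalues i)

private lemma frobSq_nonneg {a b : ℕ} (A : Matrix (Fin a) (Fin b) ℝ) : 0 ≤ frobSq A := by
  unfold frobSq; positivity

private lemma frobSq_add {a b : ℕ} (C P : Matrix (Fin a) (Fin b) ℝ) :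
    frobSq (C + P) = frobSq C + 2 * (∑ i, ∑ j, C i j * P i j) + frobSq P := by
  simp only [frobSq, Matrix.add_apply, Finset.mul_sum, ← Finset.sum_add_distrib]
  exact Finset.sum_congr rfl fun i _ => Finset.sum_congr rfl fun j _ => by ring

/-- Case `d_x ≤ d_y`, all widths `≥ d_x`: a critical point of
`L(W) = ½‖W_{H+1}···W₁X − Y‖_F²` with `σ_min(W_H···W₁) ≥ ε > 0` satisfies
`(W_{H+1}···W₁X − Y)Xᵀ = 0` and is a global minimum of `L`.
Layers are indexed `0,…,H` (`W i` is the paper's `W_{i+1}`); the suffix transposed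
products `A i = W_{i+1}ᵀ···W_{H+1}ᵀ` and prefix transposed products `B i = W₁ᵀ···W_iᵀ`
are characterized by their recurrences, so `(A 0)ᵀ = W_{H+1}···W₁`,
`(B H)ᵀ = W_H···W₁`, and criticality reads `A (i+1) E B i = 0` for all `i`. -/
theorem critical_point_is_global_min_dx_le_dy
    {H m : ℕ} {d : ℕ → ℕ}
    (hdxy : d 0 ≤ d (H + 1)) (hdxm : d 0 ≤ m)
    (hwide : ∀ i ≤ H + 1, d 0 ≤ d i)
    (X : Matrix (Fin (d 0)) (Fin m) ℝ) (Y : Matrix (Fin (d (H + 1))) (Fin m) ℝ)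
    (hX : IsUnit (X * Xᵀ))
    (W : ∀ i : ℕ, Matrix (Fin (d (i + 1))) (Fin (d i)) ℝ)
    (A : ∀ i : ℕ, Matrix (Fin (d i)) (Fin (d (H + 1))) ℝ)
    (B : ∀ i : ℕ, Matrix (Fin (d 0)) (Fin (d i)) ℝ)
    (hAtop : A (H + 1) = 1)
    (hA : ∀ i ≤ H, A i = (W i)ᵀ * A (i + 1))
    (hB0 : B 0 = 1)
    (hB : ∀ i ≤ H, B (i + 1) = B i * (W i)ᵀ)
    (ε : ℝ) (hε : 0 < ε)
    (hsigma : sigmaMinCols ((B H)ᵀ) ≥ ε)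
    (hcrit : ∀ i ≤ H, A (i + 1) * (((A 0)ᵀ * X - Y) * Xᵀ) * B i = 0) :
    ((A 0)ᵀ * X - Y) * Xᵀ = 0 ∧
    (∀ (V : ∀ i : ℕ, Matrix (Fin (d (i + 1))) (Fin (d i)) ℝ)
       (A' : ∀ i : ℕ, Matrix (Fin (d i)) (Fin (d (H + 1))) ℝ),
        A' (H + 1) = 1 →
        (∀ i ≤ H, A' i = (V i)ᵀ * A' (i + 1)) →
        (1 / 2 : ℝ) * frobSq ((A 0)ᵀ * X - Y) ≤
          (1 / 2 : ℝ) * frobSq ((A' 0)ᵀ * X - Y)) := by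
  set E := ((A 0)ᵀ * X - Y) * Xᵀ with hEdef
  -- criticality at top layer gives E * B H = 0
  have hEB : E * B H = 0 := by
    have := hcrit H le_rfl
    rwa [hAtop, Matrix.one_mul] at this
  -- the Gram matrix G = B H * (B H)ᵀ is invertible
  set M := (B H)ᵀ with hM
  set G := Mᵀ * M with hG
  have hHerm : G.IsHermitian := Matrix.isHermitian_conjTranspose_mul_self M
  have hsqrt : ε ≤ Real.sqrt (⨅ i, hHerm.eigenvalues i) := hsigma
  have htpos : 0 < ⨅ i, hHerm.eigenvalues i :=
    Real.sqrt_pos.mp (lt_of_lt_of_le hε hsqrt)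
  have heig : ∀ i, 0 < hHerm.eigenvalues i := fun i =>
    lt_of_lt_of_le htpos (ciInf_le (Set.Finite.bddBelow (Set.finite_range _)) i)
  have hdet : IsUnit G.det := by
    rw [hHerm.det_eq_prod_eigenvalues]
    exact (Finset.prod_pos fun i _ => heig i).ne'.isUnit
  have hEG : E * G = 0 := by
    have hMt : Mᵀ = B H := Matrix.transpose_transpose _
    rw [hG, ← Matrix.mul_assoc, hMt, hEB, Matrix.zero_mul]
  have hE0 : E = 0 := by
    calc E = E * (G * G⁻¹) := by rw [Matrix.mul_nonsing_inv _ hdet, Matrix.mul_one]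
    _ = (E * G) * G⁻¹ := (Matrix.mul_assoc E G G⁻¹).symm
    _ = 0 := by rw [hEG, Matrix.zero_mul]
  refine ⟨hE0, ?_⟩
  intro V A' _ _
  set C := (A 0)ᵀ * X - Y with hC
  set Q := (A' 0)ᵀ - (A 0)ᵀ with hQ
  have hdecomp : (A' 0)ᵀ * X - Y = C + Q * X := by
    rw [hQ, Matrix.sub_mul, hC]; abel
  have hCX : C * Xᵀ = 0 := hE0
  have hcross : (∑ i, ∑ j, C i j * (Q * X) i j) = 0 := by
    have key : ∀ i, (∑ j, C i j * (Q * X) i j) = ∑ k, Q i k * (C * Xᵀ) i k := by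
      intro i
      simp only [Matrix.mul_apply, Matrix.transpose_apply, Finset.mul_sum]
      rw [Finset.sum_comm]
      exact Finset.sum_congr rfl fun k _ => Finset.sum_congr rfl fun j _ => by ring
    simp [key, hCX]
  have := frobSq_add C (Q * X)
  rw [hcross] at this
  rw [← hdecomp] at this
  have hle : frobSq C ≤ frobSq ((A' 0)ᵀ * X - Y) := by
    rw [this]
    have := frobSq_nonneg (Q * X)
    linarith
  linarith
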